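/- Let U be an [n,k]_{q^m/q} system with n > 2m, and suppose there exists an F_{q^m}-subspace M of codimension 2 with U + M = F_{q^m}^k (as F_q-spaces). Then U is 2-spannable. -/

import Mathlib

open Module Submodule

variable (Fq : Type*) {L : Type*} [Field Fq] [Field L] [Algebra Fq L]

/-- The rank support of a vector `x ∈ L^n` (L = F_{q^m}, Fq = F_q): the `Fq`-span of the
rows of its coordinate matrix, equivalently the span of all `(f (x 1), …, f (x n))` for
`Fq`-linear functionals `f : L → Fq`. -/
def rsupp {n : ℕ} (x : Fin n → L) : Submodule Fq (Fin n → Fq) :=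
  Submodule.span Fq {v | ∃ f : L →ₗ[Fq] Fq, v = fun j => f (x j)}

/-- The rank (weight) of a vector. -/
noncomputable def rrk {n : ℕ} (x : Fin n → L) : ℕ :=
  Module.finrank Fq (rsupp Fq x)

/-- A linear rank-metric code is intersecting if the supports of any two nonzero
codewords meet nontrivially. -/
def RankIntersecting {n : ℕ} (C : Submodule L (Fin n → L)) : Prop :=
  ∀ c ∈ C, ∀ c' ∈ C, c ≠ 0 → c' ≠ 0 → rsupp Fq c ⊓ rsupp Fq c' ≠ ⊥

/-- A rank-metric code is nondegenerate if the supports of its codewords span `Fq^n`. -/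
def Nondeg {n : ℕ} (C : Submodule L (Fin n → L)) : Prop :=
  (⨆ c ∈ C, rsupp Fq c) = ⊤

/-- An `L`-hyperplane of `L^k`. -/
def IsHyperplane {k : ℕ} (H : Submodule L (Fin k → L)) : Prop :=
  ∃ φ : (Fin k → L) →ₗ[L] L, φ ≠ 0 ∧ H = LinearMap.ker φ

/-- A `q`-system `U` is 2-spannable if it is spanned by its intersections with two
`L`-hyperplanes. -/
def TwoSpannable {k : ℕ} (U : Submodule Fq (Fin k → L)) : Prop :=
  ∃ H₁ H₂ : Submodule L (Fin k → L), IsHyperplane H₁ ∧ IsHyperplane H₂ ∧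
    U = (U ⊓ H₁.restrictScalars Fq) ⊔ (U ⊓ H₂.restrictScalars Fq)

/-- A minimal rank-metric code. -/
def MinimalCode {n : ℕ} (C : Submodule L (Fin n → L)) : Prop :=
  ∀ c ∈ C, ∀ c' ∈ C, rsupp Fq c ≤ rsupp Fq c' → ∃ lam : L, c' = lam • c

lemma frk_rs [FiniteDimensional Fq L] {k : ℕ} (N : Submodule L (Fin k → L)) :
    finrank Fq (N.restrictScalars Fq) = finrank Fq L * finrank L N := by
  rw [((Submodule.restrictScalarsEquiv Fq L (Fin k → L) N).restrictScalars Fq).finrank_eq]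
  exact (Module.finrank_mul_finrank Fq L N).symm

theorem stmt15 [FiniteDimensional Fq L] {k m n : ℕ} (hm : m = finrank Fq L)
    (hn : 2 * m < n) (U : Submodule Fq (Fin k → L)) (hU : finrank Fq U = n)
    (hspan : Submodule.span L (U : Set (Fin k → L)) = ⊤)
    (M : Submodule L (Fin k → L)) (hM : finrank L M + 2 = k)
    (hsum : U ⊔ M.restrictScalars Fq = ⊤) :
    TwoSpannable Fq U := by
  classical
  have hfdL : FiniteDimensional Fq (Fin k → L) := Module.Finite.trans L _
  have hkV : finrank L (Fin k → L) = k := Module.finrank_fin_fun L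
  -- the quotient has dimension 2
  have hQ : finrank L ((Fin k → L) ⧸ M) = 2 := by
    have h := Submodule.finrank_quotient_add_finrank M
    rw [hkV] at h
    omega
  let b : Basis (Fin 2) L ((Fin k → L) ⧸ M) := finBasisOfFinrankEq L _ hQ
  let φ : Fin 2 → ((Fin k → L) →ₗ[L] L) := fun i => (b.coord i) ∘ₗ M.mkQ
  let H : Fin 2 → Submodule L (Fin k → L) := fun i => LinearMap.ker (φ i)
  have hφne : ∀ i, φ i ≠ 0 := by
    intro i h
    obtain ⟨x, hx⟩ := M.mkQ_surjective (b i)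
    have : φ i x = 1 := by simp [φ, hx]
    rw [h] at this
    simp at this
  have hMH : ∀ i, M ≤ H i := by
    intro i x hx
    have : M.mkQ x = 0 := by rwa [← LinearMap.mem_ker, Submodule.ker_mkQ]
    simp [H, φ, LinearMap.mem_ker, this]
  have hHM : H 0 ⊓ H 1 = M := by
    ext x
    simp only [Submodule.mem_inf, H, LinearMap.mem_ker, φ, LinearMap.comp_apply]
    constructor
    · rintro ⟨h0, h1⟩
      have : M.mkQ x = 0 := by
        rw [← b.forall_coord_eq_zero_iff]
        intro i
        fin_cases i <;> assumption
      rwa [← Submodule.ker_mkQ M, LinearMap.mem_ker]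
    · intro hx
      have : M.mkQ x = 0 := by rwa [← LinearMap.mem_ker, Submodule.ker_mkQ]
      simp [this]
  have hHdim : ∀ i, finrank L (H i) = k - 1 := by
    intro i
    have h := LinearMap.finrank_range_add_finrank_ker (φ i)
    have hr : LinearMap.range (φ i) = ⊤ := by
      rw [LinearMap.range_eq_top]
      intro y
      have : ∃ x, φ i x ≠ 0 := by
        by_contra hc
        push_neg at hc
        exact hφne i (LinearMap.ext fun x => hc x)
      obtain ⟨x, hx⟩ := this
      exact ⟨(y / φ i x) • x, by rw [map_smul, smul_eq_mul]; field_simp⟩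
    rw [hr, finrank_top, hkV, Module.finrank_self] at h
    show finrank L (LinearMap.ker (φ i)) = k - 1
    omega
  -- dimension bookkeeping over Fq
  have hsum' : ∀ i, U ⊔ (H i).restrictScalars Fq = ⊤ := by
    intro i
    refine le_antisymm le_top ?_
    rw [← hsum]
    exact sup_le_sup_left (fun x hx => hMH i hx) U
  have hVfq : finrank Fq (Fin k → L) = m * k := by
    calc finrank Fq (Fin k → L) = finrank Fq L * finrank L (Fin k → L) :=
            (Module.finrank_mul_finrank Fq L _).symm
      _ = m * k := by rw [hkV, hm]
  have hdimHfq : ∀ i, finrank Fq ((H i).restrictScalars Fq) = m * (k - 1) := by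
    intro i; rw [frk_rs, hHdim, hm]
  have hdimMfq : finrank Fq (M.restrictScalars Fq) = m * (k - 2) := by
    rw [frk_rs, hm]; congr 1; omega
  -- Grassmann
  have key : ∀ (A B : Submodule Fq (Fin k → L)),
      finrank Fq (A ⊔ B : Submodule Fq (Fin k → L)) + finrank Fq (A ⊓ B : Submodule Fq (Fin k → L))
        = finrank Fq A + finrank Fq B := fun A B =>
    Submodule.finrank_sup_add_finrank_inf_eq A B
  have hUHi : ∀ i, finrank Fq (U ⊓ (H i).restrictScalars Fq : Submodule Fq (Fin k → L)) = n - m := by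
    intro i
    have h := key U ((H i).restrictScalars Fq)
    rw [hsum' i, finrank_top, hVfq, hU, hdimHfq i] at h
    have hmk : m * (k - 1) + m = m * k := by
      have : k - 1 + 1 = k := by omega
      calc m * (k - 1) + m = m * (k - 1 + 1) := by ring
        _ = m * k := by rw [this]
    omega
  have hUM : finrank Fq (U ⊓ M.restrictScalars Fq : Submodule Fq (Fin k → L)) = n - 2 * m := by
    have h := key U (M.restrictScalars Fq)
    rw [hsum, finrank_top, hVfq, hU, hdimMfq] at h
    have hmk : m * (k - 2) + 2 * m = m * k := by
      have : k - 2 + 2 = k := by omega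
      calc m * (k - 2) + 2 * m = m * (k - 2 + 2) := by ring
        _ = m * k := by rw [this]
    omega
  -- intersection of the two pieces
  have hinter : (U ⊓ (H 0).restrictScalars Fq) ⊓ (U ⊓ (H 1).restrictScalars Fq)
      = U ⊓ M.restrictScalars Fq := by
    rw [← hHM]
    ext x
    simp only [Submodule.mem_inf, Submodule.restrictScalars_mem]
    tauto
  have hfinal := key (U ⊓ (H 0).restrictScalars Fq) (U ⊓ (H 1).restrictScalars Fq)
  rw [hinter, hUM, hUHi 0, hUHi 1] at hfinal
  have hdim : finrank Fq ((U ⊓ (H 0).restrictScalars Fq) ⊔ (U ⊓ (H 1).restrictScalars Fq)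
      : Submodule Fq (Fin k → L)) = n := by omega
  refine ⟨H 0, H 1, ⟨φ 0, hφne 0, rfl⟩, ⟨φ 1, hφne 1, rfl⟩, ?_⟩
  have hle : (U ⊓ (H 0).restrictScalars Fq) ⊔ (U ⊓ (H 1).restrictScalars Fq) ≤ U :=
    sup_le inf_le_left inf_le_left
  exact (Submodule.eq_of_le_of_finrank_eq hle (by rw [hdim, hU])).symm
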